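/- For any L-valued function f on N with f_{(1)} ≤ ⋯ ≤ f_{(p)} < 0 ≤ f_{(p+1)} ≤ ⋯ ≤ f_{(n)}, the symmetric Sugeno integral admits the explicit form Š_v(f) = [⊻_{i=1}^p ( f_{(i)} ⊼ v({(1),…,(i)}) )] ⊻ [⊻_{i=p+1}^n ( f_{(i)} ⊼ v({(i),…,(n)}) )], where the first bracket combines only nonpositive terms and the second only nonnegative terms (so no associativity ambiguity arises). -/

import Mathlib

variable {L : Type*}

/-- Absolute value on a symmetric linearly ordered set with reflection `neg`. -/
def sabs [LinearOrder L] (neg : L → L) (a : L) : L := a ⊔ neg a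

/-- The symmetric maximum. -/
def symmax [LinearOrder L] (neg : L → L) (zero : L) (a b : L) : L :=
  if b = neg a then zero
  else if sabs neg a ⊔ sabs neg b = neg a ∨ sabs neg a ⊔ sabs neg b = neg b then
    neg (sabs neg a ⊔ sabs neg b)
  else sabs neg a ⊔ sabs neg b

/-- The sign function, valued in {-1, 0, 1}. -/
def sgn [LinearOrder L] (zero a : L) : ℤ :=
  if a < zero then -1 else if a = zero then 0 else 1

/-- The symmetric minimum. -/
def symmin [LinearOrder L] (neg : L → L) (zero : L) (a b : L) : L :=
  if sgn zero a ≠ sgn zero b then neg (sabs neg a ⊓ sabs neg b)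
  else sabs neg a ⊓ sabs neg b

/-- The Sugeno integral of `f` with respect to `v`, in max-min (Möbius) form. -/
def sugeno {n : ℕ} [LinearOrder L] [BoundedOrder L]
    (v : Finset (Fin n) → L) (f : Fin n → L) : L :=
  Finset.univ.powerset.sup fun A : Finset (Fin n) => A.inf f ⊓ v A

/-- The symmetric Sugeno integral Š_v(f) = S_v(f⁺) ⊻ (−S_v(f⁻)),
where f⁺ = f ∨ 0 and f⁻ = (−f) ∨ 0. -/
def symSugeno {n : ℕ} [LinearOrder L] [BoundedOrder L]
    (neg : L → L) (zero : L) (v : Finset (Fin n) → L) (f : Fin n → L) : L :=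
  symmax neg zero (sugeno v fun i => f i ⊔ zero) (neg (sugeno v fun i => neg (f i) ⊔ zero))

/-- Iterated symmetric maximum over a list of indices. -/
def symmaxFold [LinearOrder L] (neg : L → L) (zero : L) (l : List (L)) : L :=
  l.foldr (symmax neg zero) zero

section Aux

variable [LinearOrder L] {neg : L → L} {zero : L}

lemma sabs_of_nonneg (hanti : ∀ a b : L, a ≤ b → neg b ≤ neg a) (hzero : neg zero = zero)
    {a : L} (ha : zero ≤ a) : sabs neg a = a :=
  sup_eq_left.mpr (((hanti _ _ ha).trans_eq hzero).trans ha)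

lemma sabs_of_nonpos (hanti : ∀ a b : L, a ≤ b → neg b ≤ neg a) (hzero : neg zero = zero)
    {a : L} (ha : a ≤ zero) : sabs neg a = neg a :=
  sup_eq_right.mpr (ha.trans (hzero ▸ hanti _ _ ha))

lemma neg_sup' (hanti : ∀ a b : L, a ≤ b → neg b ≤ neg a) (a b : L) :
    neg (a ⊔ b) = neg a ⊓ neg b := by
  rcases le_total a b with h | h
  · rw [sup_eq_right.mpr h, inf_eq_right.mpr (hanti _ _ h)]
  · rw [sup_eq_left.mpr h, inf_eq_left.mpr (hanti _ _ h)]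

lemma symmax_comm' (hinv : ∀ a, neg (neg a) = a) (a b : L) :
    symmax neg zero a b = symmax neg zero b a := by
  unfold symmax
  have h1 : (b = neg a) ↔ (a = neg b) :=
    ⟨fun h => by rw [h, hinv], fun h => by rw [h, hinv]⟩
  rw [sup_comm (sabs neg b) (sabs neg a)]
  by_cases h : b = neg a
  · rw [if_pos h, if_pos (h1.mp h)]
  · rw [if_neg h, if_neg (fun hh => h (h1.mpr hh))]
    by_cases hc : sabs neg a ⊔ sabs neg b = neg a ∨ sabs neg a ⊔ sabs neg b = neg b
    · rw [if_pos hc, if_pos hc.symm]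
    · rw [if_neg hc, if_neg (fun hh => hc hh.symm)]

lemma symmax_nonneg' (hinv : ∀ a, neg (neg a) = a)
    (hanti : ∀ a b : L, a ≤ b → neg b ≤ neg a) (hzero : neg zero = zero)
    {a b : L} (ha : zero ≤ a) (hb : zero ≤ b) : symmax neg zero a b = a ⊔ b := by
  unfold symmax
  rw [sabs_of_nonneg hanti hzero ha, sabs_of_nonneg hanti hzero hb]
  by_cases h : b = neg a
  · have hb0 : b = zero := le_antisymm (h.le.trans ((hanti _ _ ha).trans_eq hzero)) hb
    have ha0 : a = zero := by
      have := congrArg neg h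
      rw [hinv] at this
      rw [← this, hb0, hzero]
    rw [if_pos h, ha0, hb0, sup_idem]
  · rw [if_neg h, if_neg]
    rintro (hc | hc)
    · have h2 : a ⊔ b ≤ zero := hc.le.trans ((hanti _ _ ha).trans_eq hzero)
      have ha0 : a = zero := le_antisymm (le_sup_left.trans h2) ha
      have hb0 : b = zero := le_antisymm (le_sup_right.trans h2) hb
      exact h (by rw [hb0, ha0, hzero])
    · have h2 : a ⊔ b ≤ zero := hc.le.trans ((hanti _ _ hb).trans_eq hzero)
      have ha0 : a = zero := le_antisymm (le_sup_left.trans h2) ha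
      have hb0 : b = zero := le_antisymm (le_sup_right.trans h2) hb
      exact h (by rw [hb0, ha0, hzero])

lemma symmax_nonpos' (hinv : ∀ a, neg (neg a) = a)
    (hanti : ∀ a b : L, a ≤ b → neg b ≤ neg a) (hzero : neg zero = zero)
    {a b : L} (ha : a ≤ zero) (hb : b ≤ zero) : symmax neg zero a b = a ⊓ b := by
  unfold symmax
  rw [sabs_of_nonpos hanti hzero ha, sabs_of_nonpos hanti hzero hb]
  by_cases h : b = neg a
  · have hb0 : b = zero := le_antisymm hb (h ▸ (hzero ▸ hanti _ _ ha))
    have ha0 : a = zero := by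
      have := congrArg neg h
      rw [hinv] at this
      rw [← this, hb0, hzero]
    rw [if_pos h, ha0, hb0, inf_idem]
  · rw [if_neg h, if_pos]
    · rcases le_total a b with hab | hab
      · rw [sup_eq_left.mpr (hanti _ _ hab), inf_eq_left.mpr hab, hinv]
      · rw [sup_eq_right.mpr (hanti _ _ hab), inf_eq_right.mpr hab, hinv]
    · rcases le_total (neg a) (neg b) with hab | hab
      · exact Or.inr (sup_eq_right.mpr hab)
      · exact Or.inl (sup_eq_left.mpr hab)

lemma symmin_nonneg' (hanti : ∀ a b : L, a ≤ b → neg b ≤ neg a) (hzero : neg zero = zero)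
    {a b : L} (ha : zero ≤ a) (hb : zero ≤ b) : symmin neg zero a b = a ⊓ b := by
  unfold symmin
  rw [sabs_of_nonneg hanti hzero ha, sabs_of_nonneg hanti hzero hb]
  split_ifs with h
  · unfold sgn at h
    rw [if_neg (not_lt.mpr ha), if_neg (not_lt.mpr hb)] at h
    by_cases h1 : a = zero
    · rw [inf_eq_left.mpr (h1 ▸ hb), h1, hzero]
    · rw [if_neg h1] at h
      by_cases h2 : b = zero
      · rw [inf_eq_right.mpr (h2 ▸ ha), h2, hzero]
      · rw [if_neg h2] at h; exact absurd rfl h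
  · rfl

lemma symmin_mixed' (hanti : ∀ a b : L, a ≤ b → neg b ≤ neg a) (hzero : neg zero = zero)
    {a b : L} (ha : a < zero) (hb : zero ≤ b) :
    symmin neg zero a b = neg (neg a ⊓ b) := by
  have hsgn : sgn zero a ≠ sgn zero b := by
    unfold sgn
    rw [if_pos ha, if_neg (not_lt.mpr hb)]
    split_ifs <;> decide
  unfold symmin
  rw [if_pos hsgn, sabs_of_nonpos hanti hzero ha.le, sabs_of_nonneg hanti hzero hb]

end Aux
section Aux2

variable [LinearOrder L] {neg : L → L} {zero : L}

lemma zero_le_foldr_sup (l : List L) : zero ≤ l.foldr (· ⊔ ·) zero := by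
  induction l with
  | nil => exact le_rfl
  | cons a l ih => exact ih.trans le_sup_right

lemma foldr_inf_le_zero (l : List L) : l.foldr (· ⊓ ·) zero ≤ zero := by
  induction l with
  | nil => exact le_rfl
  | cons a l ih => exact inf_le_right.trans ih

lemma symmaxFold_of_nonneg (hinv : ∀ a, neg (neg a) = a)
    (hanti : ∀ a b : L, a ≤ b → neg b ≤ neg a) (hzero : neg zero = zero)
    (l : List L) (h : ∀ x ∈ l, zero ≤ x) :
    symmaxFold neg zero l = l.foldr (· ⊔ ·) zero := by
  induction l with
  | nil => rfl
  | cons a l ih =>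
    have ih' := ih (fun x hx => h x (List.mem_cons_of_mem a hx))
    show symmax neg zero a (symmaxFold neg zero l) = _
    rw [ih', symmax_nonneg' hinv hanti hzero (h a List.mem_cons_self)
      (zero_le_foldr_sup l)]
    rfl

lemma symmaxFold_of_nonpos (hinv : ∀ a, neg (neg a) = a)
    (hanti : ∀ a b : L, a ≤ b → neg b ≤ neg a) (hzero : neg zero = zero)
    (l : List L) (h : ∀ x ∈ l, x ≤ zero) :
    symmaxFold neg zero l = l.foldr (· ⊓ ·) zero := by
  induction l with
  | nil => rfl
  | cons a l ih =>
    have ih' := ih (fun x hx => h x (List.mem_cons_of_mem a hx))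
    show symmax neg zero a (symmaxFold neg zero l) = _
    rw [ih', symmax_nonpos' hinv hanti hzero (h a List.mem_cons_self)
      (foldr_inf_le_zero l)]
    rfl

lemma foldr_inf_neg (hanti : ∀ a b : L, a ≤ b → neg b ≤ neg a) (hzero : neg zero = zero)
    (l : List L) :
    (l.map neg).foldr (· ⊓ ·) zero = neg (l.foldr (· ⊔ ·) zero) := by
  induction l with
  | nil => exact hzero.symm
  | cons a l ih =>
    show neg a ⊓ (l.map neg).foldr (· ⊓ ·) zero = _
    rw [ih, ← neg_sup' hanti]
    rfl

lemma foldr_sup_toFinset {n : ℕ} [BoundedOrder L] (l : List (Fin n)) (t : Fin n → L) :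
    (l.map t).foldr (· ⊔ ·) zero = l.toFinset.sup t ⊔ zero := by
  induction l with
  | nil => simp
  | cons a l ih =>
    show t a ⊔ (l.map t).foldr (· ⊔ ·) zero = _
    rw [ih, List.toFinset_cons, Finset.sup_insert, sup_assoc]

end Aux2
section Aux3

variable [LinearOrder L] [BoundedOrder L] {zero : L}

lemma sugeno_mono_sorted {n : ℕ} (v : Finset (Fin n) → L)
    (hempty : v ∅ = zero) (hmono : ∀ A B : Finset (Fin n), A ⊆ B → v A ≤ v B)
    (g : Fin n → L) (σ : Equiv.Perm (Fin n)) (hg : Monotone (g ∘ σ)) :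
    sugeno v g =
      (Finset.univ.sup fun i : Fin n =>
        g (σ i) ⊓ v ((Finset.univ.filter fun k : Fin n => i ≤ k).image σ)) ⊔ zero := by
  apply le_antisymm
  · apply Finset.sup_le
    intro A hA
    rcases Finset.eq_empty_or_nonempty A with rfl | hne
    · rw [hempty, Finset.inf_empty, inf_eq_right.mpr le_top]
      exact le_sup_right
    · have hJ : (A.image σ.symm).Nonempty := hne.image _
      set i := (A.image σ.symm).min' hJ with hi
      have hiJ : i ∈ A.image σ.symm := Finset.min'_mem _ hJ
      obtain ⟨a, haA, hai⟩ := Finset.mem_image.mp hiJ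
      have hiA : σ i ∈ A := by rw [← hai, Equiv.apply_symm_apply]; exact haA
      have hsub : A ⊆ (Finset.univ.filter fun k : Fin n => i ≤ k).image σ := by
        intro x hx
        refine Finset.mem_image.mpr ⟨σ.symm x, ?_, Equiv.apply_symm_apply _ _⟩
        refine Finset.mem_filter.mpr ⟨Finset.mem_univ _, ?_⟩
        exact Finset.min'_le _ _ (Finset.mem_image_of_mem _ hx)
      refine le_trans ?_ (le_sup_left.trans' (Finset.le_sup (Finset.mem_univ i)))
      exact inf_le_inf (Finset.inf_le hiA) (hmono _ _ hsub)
  · apply sup_le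
    · apply Finset.sup_le
      intro i _
      set T := (Finset.univ.filter fun k : Fin n => i ≤ k).image σ with hT
      have h1 : g (σ i) ≤ T.inf g := by
        apply Finset.le_inf
        intro x hx
        obtain ⟨k, hk, rfl⟩ := Finset.mem_image.mp hx
        exact hg (Finset.mem_filter.mp hk).2
      refine le_trans (inf_le_inf h1 le_rfl) ?_
      exact Finset.le_sup (f := fun A : Finset (Fin n) => A.inf g ⊓ v A) (Finset.mem_powerset.mpr (Finset.subset_univ T))
    · show zero ≤ Finset.univ.powerset.sup fun A : Finset (Fin n) => A.inf g ⊓ v A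
      have h0 : (∅ : Finset (Fin n)).inf g ⊓ v ∅ = zero := by
        rw [hempty, Finset.inf_empty, inf_eq_right.mpr le_top]
      exact h0.symm.le.trans
        (Finset.le_sup (f := fun A : Finset (Fin n) => A.inf g ⊓ v A) (Finset.mem_powerset.mpr (Finset.empty_subset Finset.univ)))

lemma sugeno_anti_sorted {n : ℕ} (v : Finset (Fin n) → L)
    (hempty : v ∅ = zero) (hmono : ∀ A B : Finset (Fin n), A ⊆ B → v A ≤ v B)
    (g : Fin n → L) (σ : Equiv.Perm (Fin n)) (hg : Antitone (g ∘ σ)) :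
    sugeno v g =
      (Finset.univ.sup fun i : Fin n =>
        g (σ i) ⊓ v ((Finset.univ.filter fun k : Fin n => k ≤ i).image σ)) ⊔ zero := by
  apply le_antisymm
  · apply Finset.sup_le
    intro A hA
    rcases Finset.eq_empty_or_nonempty A with rfl | hne
    · rw [hempty, Finset.inf_empty, inf_eq_right.mpr le_top]
      exact le_sup_right
    · have hJ : (A.image σ.symm).Nonempty := hne.image _
      set i := (A.image σ.symm).max' hJ with hi
      have hiJ : i ∈ A.image σ.symm := Finset.max'_mem _ hJ
      obtain ⟨a, haA, hai⟩ := Finset.mem_image.mp hiJ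
      have hiA : σ i ∈ A := by rw [← hai, Equiv.apply_symm_apply]; exact haA
      have hsub : A ⊆ (Finset.univ.filter fun k : Fin n => k ≤ i).image σ := by
        intro x hx
        refine Finset.mem_image.mpr ⟨σ.symm x, ?_, Equiv.apply_symm_apply _ _⟩
        refine Finset.mem_filter.mpr ⟨Finset.mem_univ _, ?_⟩
        exact Finset.le_max' _ _ (Finset.mem_image_of_mem _ hx)
      refine le_trans ?_ (le_sup_left.trans' (Finset.le_sup (Finset.mem_univ i)))
      exact inf_le_inf (Finset.inf_le hiA) (hmono _ _ hsub)
  · apply sup_le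
    · apply Finset.sup_le
      intro i _
      set T := (Finset.univ.filter fun k : Fin n => k ≤ i).image σ with hT
      have h1 : g (σ i) ≤ T.inf g := by
        apply Finset.le_inf
        intro x hx
        obtain ⟨k, hk, rfl⟩ := Finset.mem_image.mp hx
        exact hg (Finset.mem_filter.mp hk).2
      refine le_trans (inf_le_inf h1 le_rfl) ?_
      exact Finset.le_sup (f := fun A : Finset (Fin n) => A.inf g ⊓ v A) (Finset.mem_powerset.mpr (Finset.subset_univ T))
    · show zero ≤ Finset.univ.powerset.sup fun A : Finset (Fin n) => A.inf g ⊓ v A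
      have h0 : (∅ : Finset (Fin n)).inf g ⊓ v ∅ = zero := by
        rw [hempty, Finset.inf_empty, inf_eq_right.mpr le_top]
      exact h0.symm.le.trans
        (Finset.le_sup (f := fun A : Finset (Fin n) => A.inf g ⊓ v A) (Finset.mem_powerset.mpr (Finset.empty_subset Finset.univ)))

end Aux3
section Aux4

variable [LinearOrder L] [BoundedOrder L] {zero : L}

lemma sup_split {n : ℕ} (q : Fin n → Prop) [DecidablePred q] (F G : Fin n → L)
    (h1 : ∀ i, q i → F i = G i) (h2 : ∀ i, ¬ q i → F i ≤ zero) :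
    Finset.univ.sup F ⊔ zero = (Finset.univ.filter q).sup G ⊔ zero := by
  conv_lhs => rw [← Finset.filter_union_filter_not_eq q Finset.univ]
  rw [Finset.sup_union,
    Finset.sup_congr rfl (fun i hi => h1 i (Finset.mem_filter.mp hi).2), sup_assoc,
    sup_eq_right.mpr (Finset.sup_le fun i hi => h2 i (Finset.mem_filter.mp hi).2)]

end Aux4
/-- explicit form of the symmetric Sugeno integral, where f is
sorted increasingly along σ and its first p values are negative:
Š_v(f) = [⊻_{i≤p} (f_{(i)} ⊼ v({(1),…,(i)}))] ⊻ [⊻_{i>p} (f_{(i)} ⊼ v({(i),…,(n)}))]. -/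
theorem symSugeno_explicit {n : ℕ} [LinearOrder L] [BoundedOrder L]
    (neg : L → L) (zero : L)
    (hinv : ∀ a, neg (neg a) = a)
    (hanti : ∀ a b : L, a ≤ b → neg b ≤ neg a)
    (hzero : neg zero = zero)
    (v : Finset (Fin n) → L)
    (hempty : v ∅ = zero) (hfull : v Finset.univ = ⊤)
    (hmono : ∀ A B : Finset (Fin n), A ⊆ B → v A ≤ v B)
    (hpos : ∀ A : Finset (Fin n), zero ≤ v A)
    (f : Fin n → L) (σ : Equiv.Perm (Fin n)) (hσ : Monotone (f ∘ σ))
    (p : ℕ) (hp : ∀ i : Fin n, f (σ i) < zero ↔ (i : ℕ) < p) :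
    symSugeno neg zero v f =
      symmax neg zero
        (symmaxFold neg zero
          (((List.finRange n).filter fun i : Fin n => decide ((i : ℕ) < p)).map fun i =>
            symmin neg zero (f (σ i))
              (v ((Finset.univ.filter fun k : Fin n => k ≤ i).image σ))))
        (symmaxFold neg zero
          (((List.finRange n).filter fun i : Fin n => decide (p ≤ (i : ℕ))).map fun i =>
            symmin neg zero (f (σ i))
              (v ((Finset.univ.filter fun k : Fin n => i ≤ k).image σ)))) := by
  classical
  have hfpos : ∀ i : Fin n, p ≤ (i : ℕ) → zero ≤ f (σ i) := fun i hi =>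
    le_of_not_gt (fun hlt => absurd ((hp i).mp hlt) (not_lt.mpr hi))
  have hfneg : ∀ i : Fin n, (i : ℕ) < p → f (σ i) < zero := fun i hi => (hp i).mpr hi
  -- the positive part of the integral
  have hgmono : Monotone ((fun i => f i ⊔ zero) ∘ σ) := fun a b hab =>
    sup_le_sup_right (hσ hab) zero
  have hA2 : sugeno v (fun i => f i ⊔ zero)
      = (Finset.univ.filter fun i : Fin n => p ≤ (i : ℕ)).sup
          (fun i => f (σ i) ⊓ v ((Finset.univ.filter fun k : Fin n => i ≤ k).image σ)) ⊔ zero := by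
    rw [sugeno_mono_sorted v hempty hmono (fun i => f i ⊔ zero) σ hgmono]
    refine sup_split (fun i : Fin n => p ≤ (i : ℕ)) _ _ ?_ ?_
    · intro i hi
      rw [sup_eq_left.mpr (hfpos i hi)]
    · intro i hi
      rw [sup_eq_right.mpr (hfneg i (not_le.mp hi)).le]
      exact inf_le_left
  -- the negative part of the integral
  have hhanti : Antitone ((fun i => neg (f i) ⊔ zero) ∘ σ) := fun a b hab =>
    sup_le_sup_right (hanti _ _ (hσ hab)) zero
  have hB2 : sugeno v (fun i => neg (f i) ⊔ zero)
      = (Finset.univ.filter fun i : Fin n => (i : ℕ) < p).sup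
          (fun i => neg (f (σ i)) ⊓ v ((Finset.univ.filter fun k : Fin n => k ≤ i).image σ)) ⊔ zero := by
    rw [sugeno_anti_sorted v hempty hmono (fun i => neg (f i) ⊔ zero) σ hhanti]
    refine sup_split (fun i : Fin n => (i : ℕ) < p) _ _ ?_ ?_
    · intro i hi
      rw [sup_eq_left.mpr (hzero ▸ hanti _ _ (hfneg i hi).le)]
    · intro i hi
      rw [sup_eq_right.mpr ((hanti _ _ (hfpos i (not_lt.mp hi))).trans_eq hzero)]
      exact inf_le_left
  -- the positive-side fold
  have hlpmem : ∀ i ∈ (List.finRange n).filter fun i : Fin n => decide (p ≤ (i : ℕ)),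
      p ≤ (i : ℕ) := fun i hi => by simpa using (List.mem_filter.mp hi).2
  have hRpos : symmaxFold neg zero
        (((List.finRange n).filter fun i : Fin n => decide (p ≤ (i : ℕ))).map fun i =>
          symmin neg zero (f (σ i))
            (v ((Finset.univ.filter fun k : Fin n => i ≤ k).image σ)))
      = (Finset.univ.filter fun i : Fin n => p ≤ (i : ℕ)).sup
          (fun i => f (σ i) ⊓ v ((Finset.univ.filter fun k : Fin n => i ≤ k).image σ)) ⊔ zero := by
    rw [List.map_congr_left (fun i hi =>
      symmin_nonneg' hanti hzero (hfpos i (hlpmem i hi)) (hpos _))]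
    rw [symmaxFold_of_nonneg hinv hanti hzero _ (by
      intro x hx
      obtain ⟨i, hi, rfl⟩ := List.mem_map.mp hx
      exact le_inf (hfpos i (hlpmem i hi)) (hpos _)), foldr_sup_toFinset]
    congr 2
    ext i
    simp [List.mem_filter]
  -- the negative-side fold
  have hlnmem : ∀ i ∈ (List.finRange n).filter fun i : Fin n => decide ((i : ℕ) < p),
      (i : ℕ) < p := fun i hi => by simpa using (List.mem_filter.mp hi).2
  have hRneg : symmaxFold neg zero
        (((List.finRange n).filter fun i : Fin n => decide ((i : ℕ) < p)).map fun i =>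
          symmin neg zero (f (σ i))
            (v ((Finset.univ.filter fun k : Fin n => k ≤ i).image σ)))
      = neg ((Finset.univ.filter fun i : Fin n => (i : ℕ) < p).sup
          (fun i => neg (f (σ i)) ⊓ v ((Finset.univ.filter fun k : Fin n => k ≤ i).image σ)) ⊔ zero) := by
    rw [List.map_congr_left (fun i hi =>
      symmin_mixed' hanti hzero (hfneg i (hlnmem i hi)) (hpos _))]
    rw [show (((List.finRange n).filter fun i : Fin n => decide ((i : ℕ) < p)).map fun i =>
          neg (neg (f (σ i)) ⊓ v ((Finset.univ.filter fun k : Fin n => k ≤ i).image σ)))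
        = (((List.finRange n).filter fun i : Fin n => decide ((i : ℕ) < p)).map fun i =>
            neg (f (σ i)) ⊓ v ((Finset.univ.filter fun k : Fin n => k ≤ i).image σ)).map neg
      from List.map_map.symm]
    rw [symmaxFold_of_nonpos hinv hanti hzero _ (by
      intro x hx
      obtain ⟨y, hy, rfl⟩ := List.mem_map.mp hx
      obtain ⟨i, hi, rfl⟩ := List.mem_map.mp hy
      exact (hanti _ _ (le_inf (hzero ▸ hanti _ _ (hfneg i (hlnmem i hi)).le)
        (hpos _))).trans_eq hzero)]
    rw [foldr_inf_neg hanti hzero, foldr_sup_toFinset]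
    congr 3
    ext i
    simp [List.mem_filter]
  -- assembly
  show symmax neg zero (sugeno v fun i => f i ⊔ zero)
      (neg (sugeno v fun i => neg (f i) ⊔ zero)) = _
  rw [hA2, hB2, hRpos, hRneg]
  exact symmax_comm' hinv _ _
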